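/- arXiv:0902.3220 — 2 statements merged into one kernel-verified Lean document; each statement's English description precedes it below -/
import Mathlib

section
/- Let Γ ≤ Aut(T) be a group acting on a rooted tree, let g ∈ Γ, and let v ≤ w be vertices such that g fixes v but g moves w. Then the normal closure of g in Γ contains the commutator subgroup rist_Γ(w)' of the rigid stabilizer of w. -/
open List

/-- Vertices of the regular rooted tree over alphabet `X`: finite words. -/
abbrev Vtx (X : Type*) := List X

section Tree

variable {X : Type*} [DecidableEq X]

/-- A permutation of the vertex set is a rooted-tree automorphism if it fixes the
root and maps children of a vertex to children of its image. -/
def IsTreeAut (f : Equiv.Perm (Vtx X)) : Prop :=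
  f [] = [] ∧ ∀ (w : Vtx X) (x : X), ∃ y : X, f (w ++ [x]) = f w ++ [y]

/-- The state (section) of `f` at the vertex `w`, as a function on vertices. -/
def stateFun (f : Equiv.Perm (Vtx X)) (w : Vtx X) : Vtx X → Vtx X :=
  fun t => (f (w ++ t)).drop w.length

/-- The rigid stabilizer of the vertex `v` in the full automorphism group:
all permutations moving only (proper or improper) descendants of `v`. -/
def rist (v : Vtx X) : Subgroup (Equiv.Perm (Vtx X)) where
  carrier := {g | ∀ w : Vtx X, ¬ v <+: w → g w = w}
  one_mem' := by intro w _; rfl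
  mul_mem' := by
    intro a b ha hb w hw
    have : (a * b) w = a (b w) := rfl
    rw [this, hb w hw, ha w hw]
  inv_mem' := by
    intro a ha w hw
    have h := ha w hw
    conv_lhs => rw [← h]
    simp

/-- The rigid stabilizer of `v` in `G`. -/
def ristG (G : Subgroup (Equiv.Perm (Vtx X))) (v : Vtx X) :
    Subgroup (Equiv.Perm (Vtx X)) :=
  rist v ⊓ G

/-- The `n`-th level rigid stabilizer of `G`: the subgroup generated by the
rigid stabilizers of all vertices of level `n`. -/
def ristLevel (G : Subgroup (Equiv.Perm (Vtx X))) (n : ℕ) :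
    Subgroup (Equiv.Perm (Vtx X)) :=
  ⨆ v ∈ {v : Vtx X | v.length = n}, ristG G v

/-- The `n`-th level stabilizer of `G`: elements fixing all vertices of level `≤ n`. -/
def stabLevel (G : Subgroup (Equiv.Perm (Vtx X))) (n : ℕ) :
    Subgroup (Equiv.Perm (Vtx X)) :=
  G ⊓ { carrier := {g | ∀ w : Vtx X, w.length ≤ n → g w = w}
        one_mem' := by intro w _; rfl
        mul_mem' := by
          intro a b ha hb w hw
          have : (a * b) w = a (b w) := rfl
          rw [this, hb w hw, ha w hw]
        inv_mem' := by
          intro a ha w hw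
          have h := ha w hw
          conv_lhs => rw [← h]
          simp }

/-- Underlying function of the vtr `v*g`. -/
def vtrFun (v : Vtx X) (g : Vtx X → Vtx X) : Vtx X → Vtx X :=
  fun w => if v <+: w then v ++ g (w.drop v.length) else w

lemma vtr_aux (v : Vtx X) (g h : Vtx X → Vtx X)
    (hgh : ∀ t, h (g t) = t) (w : Vtx X) :
    vtrFun v h (vtrFun v g w) = w := by
  by_cases hp : v <+: w
  · obtain ⟨t, rfl⟩ := hp
    simp [vtrFun, List.drop_left, hgh, List.prefix_append]
  · simp [vtrFun, hp]

/-- The vtr `v*g`: the automorphism acting as `g` on the subtree rooted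
at `v` and trivially elsewhere. -/
def vtr (v : Vtx X) (g : Equiv.Perm (Vtx X)) : Equiv.Perm (Vtx X) where
  toFun := vtrFun v g
  invFun := vtrFun v g.symm
  left_inv := vtr_aux v g g.symm fun t => g.symm_apply_apply t
  right_inv := vtr_aux v g.symm g fun t => g.apply_symm_apply t

lemma vtr_apply (v : Vtx X) (g : Equiv.Perm (Vtx X)) (w : Vtx X) :
    vtr v g w = if v <+: w then v ++ g (w.drop v.length) else w := rfl

/-- `g ↦ v*g` as a group homomorphism. -/
def vtrHom (v : Vtx X) : Equiv.Perm (Vtx X) →* Equiv.Perm (Vtx X) where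
  toFun := vtr v
  map_one' := by
    ext w
    by_cases hp : v <+: w
    · obtain ⟨t, rfl⟩ := hp
      simp [vtr, vtrFun, List.drop_left, List.prefix_append]
    · simp [vtr, vtrFun, hp]
  map_mul' := by
    intro a b
    ext w
    have hmul : (vtr v a * vtr v b) w = vtr v a (vtr v b w) := rfl
    rw [hmul]
    by_cases hp : v <+: w
    · obtain ⟨t, rfl⟩ := hp
      simp [vtr, vtrFun, List.drop_left, List.prefix_append]
    · simp [vtr, vtrFun, hp]

/-- `K` is a branching subgroup of `G`: `K ≤ G` and `v*K ≤ K` for all vertices. -/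
def IsBranching (G K : Subgroup (Equiv.Perm (Vtx X))) : Prop :=
  K ≤ G ∧ ∀ v : Vtx X, ∀ g ∈ K, vtr v g ∈ K

/-- The product `X^n * K` of the translates `v*K` over all vertices of level `n`. -/
def levelProd (K : Subgroup (Equiv.Perm (Vtx X))) (n : ℕ) :
    Subgroup (Equiv.Perm (Vtx X)) :=
  Subgroup.closure {p | ∃ v : Vtx X, v.length = n ∧ ∃ g ∈ K, p = vtr v g}

/-- The group `G⋉v` of states at `v` of the rigid stabilizer:
those `g ∈ G` with `v*g ∈ G`. -/
def pristSub (G : Subgroup (Equiv.Perm (Vtx X))) (v : Vtx X) :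
    Subgroup (Equiv.Perm (Vtx X)) :=
  G ⊓ G.comap (vtrHom v)

/-- `G_#`, the intersection of all `G⋉v` (the maximal branching subgroup when
`G` is regular branch). -/
def Gsharp (G : Subgroup (Equiv.Perm (Vtx X))) : Subgroup (Equiv.Perm (Vtx X)) :=
  ⨅ v : Vtx X, pristSub G v

/-- `G` is self-similar: all states of elements of `G` are (induced by) elements of `G`. -/
def SelfSimilar (G : Subgroup (Equiv.Perm (Vtx X))) : Prop :=
  ∀ g ∈ G, ∀ w : Vtx X, ∃ h ∈ G, ∀ t : Vtx X, h t = stateFun g w t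

/-- `G` is level-transitive: transitive on each level of the tree. -/
def LevelTransitive (G : Subgroup (Equiv.Perm (Vtx X))) : Prop :=
  ∀ v w : Vtx X, v.length = w.length → ∃ g ∈ G, g v = w

/-- `G` is recurrent: the state at `v` of the stabilizer of `v` is all of `G`. -/
def Recurrent (G : Subgroup (Equiv.Perm (Vtx X))) : Prop :=
  ∀ v : Vtx X, ∀ h : Equiv.Perm (Vtx X),
    (h ∈ G ↔ ∃ g ∈ G, g v = v ∧ ∀ t : Vtx X, h t = stateFun g v t)

/-- `G` is a regular branch group (for this action): it has a non-trivial
branching subgroup `K` with all products `X^n*K` of finite index in `G`. -/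
def RegularBranch (G : Subgroup (Equiv.Perm (Vtx X))) : Prop :=
  ∃ K : Subgroup (Equiv.Perm (Vtx X)), IsBranching G K ∧ K ≠ ⊥ ∧
    ∀ n : ℕ, ((levelProd K n).subgroupOf G).FiniteIndex

/-- The subgroup generated by `e`-th powers of elements of `H`. -/
def powSubgroup {P : Type*} [Group P] (H : Subgroup P) (e : ℕ) : Subgroup P :=
  Subgroup.closure {x | ∃ h ∈ H, x = h ^ e}

/-- The normal closure of `g` in the subgroup `Γ`. -/
def nclosure {P : Type*} [Group P] (Γ : Subgroup P) (g : P) : Subgroup P :=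
  Subgroup.closure {x | ∃ h ∈ Γ, x = h * g * h⁻¹}

/-- `g` is finite-state: it has only finitely many states. -/
def FiniteState (g : Equiv.Perm (Vtx X)) : Prop :=
  {f : Vtx X → Vtx X | ∃ w : Vtx X, f = stateFun g w}.Finite

/-- `g` fixes the boundary ray `y`, i.e. it fixes each of its finite prefixes. -/
def fixesRay (g : Equiv.Perm (Vtx X)) (y : ℕ → X) : Prop :=
  ∀ n : ℕ, g ((List.range n).map y) = (List.range n).map y

end Tree

/-- A group satisfies a (non-trivial) group law. -/
def SatisfiesLaw (G : Type*) [Group G] : Prop :=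
  ∃ w : FreeGroup ℕ, w ≠ 1 ∧ ∀ φ : FreeGroup ℕ →* G, φ w = 1

section Aux

variable {X : Type*} [DecidableEq X]

lemma aux_len_preserved {f : Equiv.Perm (Vtx X)} (hf : IsTreeAut f) :
    ∀ u : Vtx X, (f u).length = u.length := by
  intro u
  induction u using List.reverseRecOn with
  | nil => simp [hf.1]
  | append_singleton u x ih =>
    obtain ⟨y, hy⟩ := hf.2 u x
    simp [hy, ih]

lemma aux_prefix_preserved {f : Equiv.Perm (Vtx X)} (hf : IsTreeAut f)
    {u t : Vtx X} (h : u <+: t) : f u <+: f t := by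
  obtain ⟨s, rfl⟩ := h
  induction s using List.reverseRecOn with
  | nil => simp
  | append_singleton s x ih =>
    obtain ⟨y, hy⟩ := hf.2 (u ++ s) x
    rw [← List.append_assoc, hy]
    exact ih.trans ⟨[y], rfl⟩

lemma aux_mem_rist {a : Equiv.Perm (Vtx X)} {u : Vtx X} (ha : a ∈ rist u) :
    ∀ x : Vtx X, ¬ u <+: x → a x = x := ha

lemma aux_rist_maps {a : Equiv.Perm (Vtx X)} {u x : Vtx X} (ha : a ∈ rist u)
    (hx : u <+: x) : u <+: a x := by
  by_contra h
  have h2 : a⁻¹ (a x) = a x := aux_mem_rist ((rist u).inv_mem ha) _ h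
  rw [Equiv.Perm.inv_def, Equiv.symm_apply_apply] at h2
  exact h (h2 ▸ hx)

lemma aux_rist_commute {a d : Equiv.Perm (Vtx X)} {u u' : Vtx X}
    (ha : a ∈ rist u) (hd : d ∈ rist u')
    (h1 : ¬ u <+: u') (h2 : ¬ u' <+: u) :
    a * d = d * a := by
  apply Equiv.ext
  intro x
  show a (d x) = d (a x)
  by_cases hu : u <+: x
  · have hu' : ¬ u' <+: x := fun hc =>
      (List.prefix_or_prefix_of_prefix hu hc).elim h1 h2
    have h3 : ¬ u' <+: a x := fun hc =>
      (List.prefix_or_prefix_of_prefix (aux_rist_maps ha hu) hc).elim h1 h2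
    rw [aux_mem_rist hd x hu', aux_mem_rist hd (a x) h3]
  · by_cases hu' : u' <+: x
    · have h3 : ¬ u <+: d x := fun hc =>
        (List.prefix_or_prefix_of_prefix hc (aux_rist_maps hd hu')).elim h1 h2
      rw [aux_mem_rist ha x hu, aux_mem_rist ha (d x) h3]
    · simp only [aux_mem_rist ha x hu, aux_mem_rist hd x hu']

end Aux

/-- if `g ∈ Γ` fixes `v` and moves a descendant `w` of `v`, then the
normal closure of `g` in `Γ` contains the commutator subgroup of `rist_Γ(w)`. -/
theorem normal_closure_contains_rist_commutator
    {X : Type*} [DecidableEq X] [Fintype X]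
    (Γ : Subgroup (Equiv.Perm (Vtx X))) (hAut : ∀ g ∈ Γ, IsTreeAut g)
    (g : Equiv.Perm (Vtx X)) (hg : g ∈ Γ) (v w : Vtx X)
    (hvw : v <+: w) (hfix : g v = v) (hmove : g w ≠ w) :
    ⁅ristG Γ w, ristG Γ w⁆ ≤ nclosure Γ g := by
  rw [Subgroup.commutator_le]
  intro a ha b hb
  obtain ⟨haR, haΓ⟩ := ha
  obtain ⟨hbR, hbΓ⟩ := hb
  have hgaut := hAut g hg
  have hlen : (g w).length = w.length := aux_len_preserved hgaut w
  have hincomp1 : ¬ w <+: g w := fun h => hmove (h.eq_of_length hlen.symm).symm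
  have hincomp2 : ¬ g w <+: w := fun h => hmove (h.eq_of_length hlen)
  -- d = g b⁻¹ g⁻¹ lives in rist (g w)
  have hd : (g * b⁻¹ * g⁻¹) ∈ rist (g w) := by
    intro x hx
    show g (b⁻¹ (g⁻¹ x)) = x
    have hnp : ¬ w <+: g⁻¹ x := by
      intro hc
      have := aux_prefix_preserved hgaut hc
      rw [Equiv.Perm.inv_def, Equiv.apply_symm_apply] at this
      exact hx this
    rw [aux_mem_rist ((rist w).inv_mem hbR) _ hnp, Equiv.Perm.inv_def, Equiv.apply_symm_apply]
  set d : Equiv.Perm (Vtx X) := g * b⁻¹ * g⁻¹ with hd_def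
  have hcomm_a : a * d = d * a := aux_rist_commute haR hd hincomp1 hincomp2
  have hcomm_b : b * d = d * b := aux_rist_commute hbR hd hincomp1 hincomp2
  -- c ∈ nclosure Γ g
  have hgen : ∀ h ∈ Γ, h * g * h⁻¹ ∈ nclosure Γ g := fun h hh =>
    Subgroup.subset_closure ⟨h, hh, rfl⟩
  have hgmem : g ∈ nclosure Γ g := by
    have := hgen 1 (one_mem Γ); simpa using this
  have hc_mem : b * d ∈ nclosure Γ g := by
    have : b * d = (b * g * b⁻¹) * g⁻¹ := by rw [hd_def]; group
    rw [this]
    exact mul_mem (hgen b hbΓ) (inv_mem hgmem)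
  have hac_mem : a * (b * d) * a⁻¹ ∈ nclosure Γ g := by
    have : a * (b * d) * a⁻¹ = ((a * b) * g * (a * b)⁻¹) * (a * g * a⁻¹)⁻¹ := by
      rw [hd_def]; group
    rw [this]
    exact mul_mem (hgen (a * b) (mul_mem haΓ hbΓ)) (inv_mem (hgen a haΓ))
  -- ⁅a, b⁆ = (a c a⁻¹) c⁻¹
  open scoped commutatorElement in
  have key : ⁅a, b⁆ = (a * (b * d) * a⁻¹) * (b * d)⁻¹ := by
    have hca : Commute a d := hcomm_a
    have hda : d * a⁻¹ = a⁻¹ * d := hca.inv_left.eq.symm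
    rw [commutatorElement_def]
    calc a * b * a⁻¹ * b⁻¹
        = a * b * (a⁻¹ * d * d⁻¹) * b⁻¹ := by group
      _ = a * b * (d * a⁻¹ * d⁻¹) * b⁻¹ := by rw [hda]
      _ = a * (b * d) * a⁻¹ * (b * d)⁻¹ := by group
  rw [key]
  exact mul_mem hac_mem (inv_mem hc_mem)
end

section
/- Let Γ ≤ Aut(T) be a level-transitive branch group. Then Γ separates the boundary ∂T: for any finite subset Y ⊂ ∂T and any point w ∈ ∂T \ Y, the pointwise stabilizer of Y in Γ contains an element moving w. Consequently (by Abért's theorem), Γ satisfies no group law. -/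
open List

section SepAux

variable {X : Type*} [DecidableEq X]

lemma aut_append {f : Equiv.Perm (Vtx X)} (hf : IsTreeAut f) (w t : Vtx X) :
    ∃ t' : Vtx X, t'.length = t.length ∧ f (w ++ t) = f w ++ t' := by
  induction t using List.reverseRecOn with
  | nil => exact ⟨[], rfl, by simp⟩
  | append_singleton s x ih =>
    obtain ⟨s', hlen, hs⟩ := ih
    obtain ⟨y, hy⟩ := hf.2 (w ++ s) x
    refine ⟨s' ++ [y], by simp [hlen], ?_⟩
    rw [← List.append_assoc, hy, hs, List.append_assoc]

lemma aut_length {f : Equiv.Perm (Vtx X)} (hf : IsTreeAut f) (w : Vtx X) :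
    (f w).length = w.length := by
  obtain ⟨t', hlen, ht⟩ := aut_append hf [] w
  simp only [List.nil_append, hf.1] at ht
  rw [ht, hlen]

lemma aut_prefix {f : Equiv.Perm (Vtx X)} (hf : IsTreeAut f) {v w : Vtx X}
    (h : v <+: w) : f v <+: f w := by
  obtain ⟨t, rfl⟩ := h
  obtain ⟨t', _, ht⟩ := aut_append hf v t
  rw [ht]
  exact List.prefix_append _ _

lemma map_range_ne {y z : ℕ → X} {n k : ℕ} (hk : k < n) (h : y k ≠ z k) :
    (List.range n).map y ≠ (List.range n).map z := by
  intro he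
  apply h
  have h1 : ((List.range n).map y)[k]'(by simpa using hk) = y k := by simp
  have h2 : ((List.range n).map z)[k]'(by simpa using hk) = z k := by simp
  rw [← h1, ← h2]
  exact List.getElem_of_eq he _

lemma exists_nontrivial_rist [Fintype X] [Nontrivial X]
    (Γ : Subgroup (Equiv.Perm (Vtx X))) (hAut : ∀ g ∈ Γ, IsTreeAut g)
    (hLT : LevelTransitive Γ)
    (hbr : ∀ n : ℕ, ((ristLevel Γ n).subgroupOf Γ).FiniteIndex) (n : ℕ) :
    ∃ v : Vtx X, v.length = n ∧ ∃ h ∈ ristG Γ v, h ≠ 1 := by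
  by_contra hc
  push_neg at hc
  have hbot : ristLevel Γ n = ⊥ := by
    refine le_bot_iff.mp (iSup_le fun v => iSup_le fun hv h hh => ?_)
    exact Subgroup.mem_bot.mpr (hc v hv h hh)
  have hfi := hbr n
  rw [hbot, Subgroup.bot_subgroupOf] at hfi
  have hidx : (⊥ : Subgroup Γ).index ≠ 0 := hfi.index_ne_zero
  rw [Subgroup.index_bot] at hidx
  have hfin : Finite Γ := (Nat.card_ne_zero.mp hidx).2
  obtain ⟨x₀⟩ : Nonempty X := inferInstance
  set N := Nat.card Γ with hN
  have hlen : ∀ g : Γ, ((g : Equiv.Perm (Vtx X)) (List.replicate N x₀)).length = N := by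
    intro g
    rw [aut_length (hAut g g.2)]
    simp
  have hsurj : Function.Surjective
      (fun g : Γ => (⟨(g : Equiv.Perm (Vtx X)) (List.replicate N x₀), hlen g⟩ :
        List.Vector X N)) := by
    rintro ⟨w, hw⟩
    obtain ⟨g, hgΓ, hgw⟩ := hLT (List.replicate N x₀) w (by simp [hw])
    exact ⟨⟨g, hgΓ⟩, Subtype.ext hgw⟩
  have hcard : Nat.card (List.Vector X N) ≤ Nat.card Γ :=
    Nat.card_le_card_of_surjective _ hsurj
  rw [Nat.card_eq_fintype_card, card_vector] at hcard
  have h2 : 2 ^ N ≤ Fintype.card X ^ N :=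
    Nat.pow_le_pow_left Fintype.one_lt_card N
  have := Nat.lt_two_pow_self (n := N)
  omega

lemma mem_rist_iff {v : Vtx X} {g : Equiv.Perm (Vtx X)} :
    g ∈ rist v ↔ ∀ w : Vtx X, ¬ v <+: w → g w = w := Iff.rfl

lemma conj_mem_rist {v : Vtx X} {g h : Equiv.Perm (Vtx X)} (hg : IsTreeAut g)
    (hh : h ∈ rist v) : g * h * g⁻¹ ∈ rist (g v) := by
  intro w hw
  show g (h (g⁻¹ w)) = w
  have hnp : ¬ v <+: g⁻¹ w := by
    intro hp
    exact hw (by simpa using aut_prefix hg hp)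
  rw [mem_rist_iff.mp hh (g⁻¹ w) hnp]
  exact g.apply_symm_apply w

end SepAux

/-- a level-transitive branch group separates the boundary of the
tree: the pointwise stabilizer of a finite set `Y` of rays fixes no ray outside
`Y`. -/
theorem branch_group_separates_boundary
    {X : Type*} [DecidableEq X] [Fintype X] [Nontrivial X]
    (Γ : Subgroup (Equiv.Perm (Vtx X))) (hAut : ∀ g ∈ Γ, IsTreeAut g)
    (hLT : LevelTransitive Γ)
    (hbr : ∀ n : ℕ, ((ristLevel Γ n).subgroupOf Γ).FiniteIndex) :
    ∀ Y : Set (ℕ → X), Y.Finite → ∀ y₀ : ℕ → X, y₀ ∉ Y →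
      ∃ g ∈ Γ, (∀ y ∈ Y, fixesRay g y) ∧ ¬ fixesRay g y₀ := by
  intro Y hYfin y₀ hy₀
  classical
  have hne : ∀ y ∈ Y, ∃ k, y k ≠ y₀ k := by
    intro y hy
    by_contra h
    push_neg at h
    exact hy₀ (funext h ▸ hy)
  set d : (ℕ → X) → ℕ := fun y => if h : ∃ k, y k ≠ y₀ k then Nat.find h else 0 with hd
  set n := hYfin.toFinset.sup fun y => d y + 1 with hn
  have hdlt : ∀ y ∈ Y, d y < n := fun y hy =>
    Nat.lt_of_lt_of_le (Nat.lt_succ_self _)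
      (Finset.le_sup (f := fun y => d y + 1) (hYfin.mem_toFinset.mpr hy))
  have hdne : ∀ y ∈ Y, y (d y) ≠ y₀ (d y) := by
    intro y hy
    have h := hne y hy
    simp only [hd, dif_pos h]
    exact Nat.find_spec h
  set v : Vtx X := (List.range n).map y₀ with hv
  -- a nontrivial rigid stabilizer at level n
  obtain ⟨v₁, hv₁len, h, hhmem, hne1⟩ := exists_nontrivial_rist Γ hAut hLT hbr n
  obtain ⟨hhr, hhΓ⟩ := hhmem
  have hu' : ¬ ∀ u : Vtx X, h u = u := fun hall => hne1 (Equiv.ext hall)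
  obtain ⟨u, hu⟩ := not_forall.mp hu'
  have hvu : v₁ <+: u := by
    by_contra hp
    exact hu (mem_rist_iff.mp hhr u hp)
  set m := u.length with hm
  have hnm : n ≤ m := hv₁len ▸ hvu.length_le
  set p : Vtx X := (List.range m).map y₀ with hp
  obtain ⟨g, hgΓ, hgu⟩ := hLT u p (by simp [hp, hm])
  set g' := g * h * g⁻¹ with hg'
  have hg'Γ : g' ∈ Γ := mul_mem (mul_mem hgΓ hhΓ) (inv_mem hgΓ)
  have hg'rist : g' ∈ rist (g v₁) := conj_mem_rist (hAut g hgΓ) hhr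
  have hgv₁ : g v₁ = v := by
    have hpre : g v₁ <+: p := by
      have := aut_prefix (hAut g hgΓ) hvu
      rwa [hgu] at this
    have hlen : (g v₁).length = n := by
      rw [aut_length (hAut g hgΓ), hv₁len]
    rw [List.prefix_iff_eq_take.mp hpre, hlen, hp, hv, ← List.map_take,
      List.take_range, Nat.min_eq_left hnm]
  rw [hgv₁] at hg'rist
  refine ⟨g', hg'Γ, ?_, ?_⟩
  · -- fixes every ray in Y
    intro y hy k
    apply mem_rist_iff.mp hg'rist
    intro hpre
    have hnk : n ≤ k := by
      have := hpre.length_le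
      simpa [hv] using this
    have : v = (List.range n).map y := by
      rw [List.prefix_iff_eq_take.mp hpre]
      have hlv : v.length = n := by simp [hv]
      rw [hlv, ← List.map_take, List.take_range, Nat.min_eq_left hnk]
    exact map_range_ne (hdlt y hy) (hdne y hy) this.symm
  · -- moves the ray y₀
    intro hfix
    have hfp : g' p = p := hfix m
    have hstep : g' p = g (h u) := by
      show g (h (g⁻¹ p)) = g (h u)
      rw [← hgu, show g⁻¹ (g u) = u from g.symm_apply_apply u]
    rw [hstep, ← hgu] at hfp
    exact hu (g.injective hfp)
end
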